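/- Every acyclic orientation of the complete bipartite graph K_{3,3} contains an alternating closed trail, i.e., a closed trail in which consecutive edges have opposite orientations. -/

import Mathlib

/-- `D` is an orientation of the (undirected, symmetric) edge relation `E`:
every directed edge is an edge of the graph, every edge gets some direction,
and no edge gets both directions. -/
def IsOrientation {V : Type*} (E D : V → V → Prop) : Prop :=
  (∀ a b, D a b → E a b) ∧ (∀ a b, E a b → (D a b ∨ D b a)) ∧
    (∀ a b, ¬ (D a b ∧ D b a))

/-- The directed graph `D` contains a directed cycle. -/
def HasDirectedCycle {V : Type*} (D : V → V → Prop) : Prop :=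
  ∃ m : ℕ, 0 < m ∧ ∃ c : ZMod m → V, ∀ i, D (c i) (c (i + 1))

/-- The directed graph `D` contains an alternating closed trail: a closed trail
`top 0, bot 0, top 1, bot 1, …, top (k-1), bot (k-1)` in which consecutive
edges have opposite orientations (each `bot j` is the head of both of its trail
edges, each `top j` is the tail of both of its trail edges), and all (unordered)
edges of the trail are distinct. -/
def HasAltClosedTrail {V : Type*} (D : V → V → Prop) : Prop :=
  ∃ k : ℕ, 0 < k ∧ ∃ top bot : ZMod k → V,
    (∀ j, D (top j) (bot j)) ∧ (∀ j, D (top (j + 1)) (bot j)) ∧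
    (∀ (j j' : ZMod k) (s s' : Bool),
      (if s then top (j + 1) else top j) = (if s' then top (j' + 1) else top j') →
      bot j = bot j' → (j, s) = (j', s'))


section Helpers

variable {V : Type*} (D : V → V → Prop)

set_option maxRecDepth 40000 in
set_option maxHeartbeats 4000000 in
/-- The key decidable fact about `K_{3,3}` orientations. -/
lemma key_fact : ∀ f : Fin 3 → Fin 3 → Bool,
    (∃ i i' j j', i ≠ i' ∧ j ≠ j' ∧ f i j = f i' j ∧ f i j = f i j' ∧ f i j = f i' j') ∨
    (∃ i i' j j', i ≠ i' ∧ j ≠ j' ∧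
      f i j = true ∧ f i' j = false ∧ f i' j' = true ∧ f i j' = false) := by
  decide

/-- A directed 4-cycle gives `HasDirectedCycle`. -/
lemma cyc4 {a b c d : V} (h1 : D a b) (h2 : D b c) (h3 : D c d) (h4 : D d a) :
    HasDirectedCycle D := by
  refine ⟨4, by norm_num, ![a, b, c, d], ?_⟩
  intro i
  fin_cases i <;> simpa using ‹_›

/-- An alternating 4-cycle gives `HasAltClosedTrail`. -/
lemma alt4 {a b c d : V} (hab : a ≠ b) (hcd : c ≠ d)
    (h1 : D a c) (h2 : D a d) (h3 : D b c) (h4 : D b d) :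
    HasAltClosedTrail D := by
  refine ⟨2, by norm_num, (fun j => if j = 0 then a else b),
    (fun j => if j = 0 then c else d), ?_, ?_, ?_⟩
  · intro j; fin_cases j; exacts [h1, h4]
  · intro j; fin_cases j; exacts [h3, h2]
  · intro j j' s s'
    fin_cases j <;> fin_cases j' <;> cases s <;> cases s' <;>
      simp_all [show (1 + 1 : ZMod 2) = 0 from rfl] <;> tauto

end Helpers

theorem stmt_2 (D : Fin 3 ⊕ Fin 3 → Fin 3 ⊕ Fin 3 → Prop)
    (hor : IsOrientation
      (fun a b => (∃ x y, a = Sum.inl x ∧ b = Sum.inr y) ∨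
        (∃ x y, a = Sum.inr x ∧ b = Sum.inl y)) D)
    (hacyc : ¬ HasDirectedCycle D) :
    HasAltClosedTrail D := by
  classical
  obtain ⟨-, htot, hanti⟩ := hor
  set f : Fin 3 → Fin 3 → Bool := fun i j =>
    if D (Sum.inl i) (Sum.inr j) then true else false with hf
  have hT : ∀ i j, f i j = true → D (Sum.inl i) (Sum.inr j) := by
    intro i j h; by_contra hd; simp [hf, hd] at h
  have hF : ∀ i j, f i j = false → D (Sum.inr j) (Sum.inl i) := by
    intro i j h
    have he := htot (Sum.inl i) (Sum.inr j) (Or.inl ⟨i, j, rfl, rfl⟩)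
    rcases he with hd | hd
    · simp [hf, hd] at h
    · exact hd
  rcases key_fact f with ⟨i, i', j, j', hii, hjj, e1, e2, e3⟩ |
    ⟨i, i', j, j', hii, hjj, e1, e2, e3, e4⟩
  · -- alternating 4-cycle
    cases hb : f i j with
    | true =>
      exact alt4 D (a := Sum.inl i) (b := Sum.inl i') (c := Sum.inr j) (d := Sum.inr j')
        (by simp [hii]) (by simp [hjj])
        (hT _ _ hb) (hT _ _ (hb ▸ e2.symm)) (hT _ _ (hb ▸ e1.symm)) (hT _ _ (hb ▸ e3.symm))
    | false =>
      exact alt4 D (a := Sum.inr j) (b := Sum.inr j') (c := Sum.inl i) (d := Sum.inl i')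
        (by simp [hjj]) (by simp [hii])
        (hF _ _ hb) (hF _ _ (hb ▸ e1.symm)) (hF _ _ (hb ▸ e2.symm)) (hF _ _ (hb ▸ e3.symm))
  · exact absurd (cyc4 D (hT _ _ e1) (hF _ _ e2) (hT _ _ e3) (hF _ _ e4)) hacyc
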